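/- Let C be a category with finite colimits and a terminal object ⊤, and let F : C ⥤ Type be a functor which sends every pushout square of C to a pullback square of types (i.e. F is 1-excisive and takes values in discrete objects). Then for every object K of C, the map F(K) ⟶ F(⊤) induced by the unique morphism K ⟶ ⊤ is a bijection; consequently F is isomorphic to the constant functor with value F(⊤). -/

import Mathlib

open CategoryTheory Limits

/-- For an epimorphism `f`, the square with both legs `f` and identities is a pushout. -/
theorem aux_isPushout_of_epi {C : Type*} [Category C] {A B : C} (f : A ⟶ B) [Epi f] :
    IsPushout f f (𝟙 B) (𝟙 B) :=
  IsPushout.of_isColimit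
    (PushoutCocone.IsColimit.mk rfl (fun s => s.inl)
      (fun s => Category.id_comp _)
      (fun s => (Category.id_comp _).trans ((cancel_epi f).1 s.condition))
      (fun s m h₁ _ => by simpa using h₁))

/-- If two squares over the same cospan are both pullbacks and one of the first projections is
an isomorphism, so is the other. -/
theorem aux_isIso_fst_of_isPullback {C : Type*} [Category C] {P Q X Y Z : C}
    {a : P ⟶ X} {b : P ⟶ Y} {f : X ⟶ Z} {g : Y ⟶ Z} {a' : Q ⟶ X} {b' : Q ⟶ Y}
    (h : IsPullback a b f g) (h' : IsPullback a' b' f g) [IsIso a'] : IsIso a := by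
  have ha : a = (IsLimit.conePointUniqueUpToIso h.isLimit h'.isLimit).hom ≫ a' := by
    have := IsLimit.conePointUniqueUpToIso_hom_comp h.isLimit h'.isLimit WalkingCospan.left
    exact this.symm
  rw [ha]
  exact IsIso.comp_isIso' (Iso.isIso_hom _) (inferInstanceAs (IsIso a'))

/-- Let `C` be a category with finite colimits and a terminal object, and let
`F : C ⥤ Type` send every pushout square to a pullback square (i.e. `F` is `1`-excisive with
discrete values).  Then for every object `K` the map `F(K) ⟶ F(⊤)` is a bijection, and
consequently `F` is isomorphic to the constant functor with value `F(⊤)`. -/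
theorem goodwillie_stmt_13 {C : Type*} [Category C] [HasFiniteColimits C] [HasTerminal C]
    (F : C ⥤ Type w)
    (hF : ∀ {P X Y Z : C} (f : P ⟶ X) (g : P ⟶ Y) (h : X ⟶ Z) (k : Y ⟶ Z),
      IsPushout f g h k → IsPullback (F.map f) (F.map g) (F.map h) (F.map k)) :
    (∀ K : C, Function.Bijective (F.map (terminal.from K))) ∧
      Nonempty (F ≅ (Functor.const C).obj (F.obj (⊤_ C))) := by
  have key : ∀ K : C, IsIso (F.map (terminal.from K)) := by
    intro K
    set t := terminal.from K with ht
    -- the "suspension" of `K`: the pushout of `⊤ ← K → ⊤`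
    have hpo : IsPushout t t (pushout.inl t t) (pushout.inr t t) := IsPushout.of_hasPushout t t
    -- the fold map `ΣK ⟶ ⊤`
    set nab : pushout t t ⟶ ⊤_ C := pushout.desc (𝟙 _) (𝟙 _) rfl with hnab
    have hinl : pushout.inl t t ≫ nab = 𝟙 _ := pushout.inl_desc _ _ _
    have hinr : pushout.inr t t ≫ nab = 𝟙 _ := pushout.inr_desc _ _ _
    haveI : IsSplitEpi nab := ⟨⟨⟨pushout.inl t t, hinl⟩⟩⟩
    -- `F` of the fold map is an isomorphism, by applying `hF` to the pushout square
    -- `(nab, nab, 𝟙, 𝟙)` which exists since `nab` is epi.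
    have hpb1 := hF nab nab (𝟙 _) (𝟙 _) (aux_isPushout_of_epi nab)
    rw [F.map_id] at hpb1
    haveI hiso : IsIso (F.map nab) :=
      aux_isIso_fst_of_isPullback hpb1 (IsPullback.of_id_fst (f := 𝟙 _))
    -- hence the two inclusions `⊤ ⟶ ΣK` are sent to the same map by `F`
    have h1 : F.map (pushout.inl t t) ≫ F.map nab = 𝟙 _ := by
      rw [← F.map_comp, hinl, F.map_id]
    have h2 : F.map (pushout.inr t t) ≫ F.map nab = 𝟙 _ := by
      rw [← F.map_comp, hinr, F.map_id]
    have hmapinl : F.map (pushout.inr t t) = F.map (pushout.inl t t) :=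
      (cancel_mono (F.map nab)).1 (h2.trans h1.symm)
    haveI : Mono (F.map (pushout.inl t t)) := mono_of_mono_fac h1
    -- apply `hF` to the suspension square
    have hpb2 := hF t t (pushout.inl t t) (pushout.inr t t) hpo
    rw [hmapinl] at hpb2
    exact aux_isIso_fst_of_isPullback hpb2
      (IsKernelPair.id_of_mono (F.map (pushout.inl t t)))
  refine ⟨fun K => (isIso_iff_bijective _).1 (key K), ⟨?_⟩⟩
  refine NatIso.ofComponents (fun K => @asIso _ _ _ _ _ (key K)) ?_
  intro K L f
  have : f ≫ terminal.from L = terminal.from K := terminal.comp_from f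
  simp only [asIso_hom, Functor.const_obj_obj, Functor.const_obj_map, Category.comp_id,
    ← F.map_comp, this]
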